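/- Fine's Strong Maximality Principle: let X be a compact Hausdorff totally disconnected topological space, let R be a transitive continuous relation on X, and let C ⊆ X be a nonempty closed subset. Then C contains a point quasi-maximal in C: there exists x ∈ C such that for all y ∈ C, R x y implies R y x. -/

import Mathlib

/-- Fine's Strong Maximality Principle: if `X` is a Stone space, `R` a transitive continuous
relation on `X`, and `C` a nonempty closed subset, then `C` contains a point quasi-maximal
in `C`. -/
theorem stmt_12 (X : Type*) [TopologicalSpace X] [CompactSpace X] [T2Space X]
    [TotallyDisconnectedSpace X] (R : X → X → Prop)
    (hRcl : ∀ x : X, IsClosed {y : X | R x y})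
    (hRpre : ∀ U : Set X, IsClopen U → IsClopen {x : X | ∃ y ∈ U, R x y})
    (htrans : Transitive R)
    (C : Set X) (hC : IsClosed C) (hCne : C.Nonempty) :
    ∃ x ∈ C, ∀ y ∈ C, R x y → R y x := by
  classical
  -- reflexive closure of R is a preorder
  letI P : Preorder X :=
    { le := fun a b => a = b ∨ R a b
      le_refl := fun a => Or.inl rfl
      le_trans := by
        rintro a b c (rfl | hab) (rfl | hbc)
        · exact Or.inl rfl
        · exact Or.inr hbc
        · exact Or.inr hab
        · exact Or.inr (htrans hab hbc) }
  have key : ∃ m ∈ C, ∀ z ∈ C, m ≤ z → z ≤ m := by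
    apply zorn_le₀
    intro c hcC hchain
    rcases c.eq_empty_or_nonempty with rfl | hcne
    · obtain ⟨x, hx⟩ := hCne
      exact ⟨x, hx, by simp⟩
    · haveI : Nonempty c := hcne.to_subtype
      set F : c → Set X := fun x => C ∩ ({(x : X)} ∪ {y | R (x : X) y}) with hF
      have hFcl : ∀ x : c, IsClosed (F x) :=
        fun x => hC.inter (isClosed_singleton.union (hRcl x))
      have hFne : ∀ x : c, (F x).Nonempty := by
        intro x
        exact ⟨(x : X), hcC x.2, Or.inl rfl⟩
      have hmono : ∀ x y : c, (x : X) ≤ (y : X) → F y ⊆ F x := by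
        rintro x y (heq | hR) z ⟨hzC, hz⟩
        · exact ⟨hzC, heq ▸ hz⟩
        · refine ⟨hzC, Or.inr ?_⟩
          rcases hz with hz | hz
          · exact hz ▸ hR
          · exact htrans hR hz
      have hdir : Directed (· ⊇ ·) F := by
        intro x y
        rcases eq_or_ne (x : X) (y : X) with heq | hne
        · exact ⟨y, hmono x y (Or.inl heq), subset_rfl⟩
        · rcases hchain x.2 y.2 hne with h | h
          · exact ⟨y, hmono x y h, subset_rfl⟩
          · exact ⟨x, subset_rfl, hmono y x h⟩
        
      have hint : (⋂ x : c, F x).Nonempty :=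
        IsCompact.nonempty_iInter_of_directed_nonempty_isCompact_isClosed F hdir hFne
          (fun x => (hFcl x).isCompact) hFcl
      obtain ⟨y, hy⟩ := hint
      simp only [Set.mem_iInter] at hy
      refine ⟨y, (hy (Classical.arbitrary c)).1, ?_⟩
      intro z hz
      rcases (hy ⟨z, hz⟩).2 with h | h
      · exact Or.inl h.symm
      · exact Or.inr h
  obtain ⟨m, hmC, hmax⟩ := key
  refine ⟨m, hmC, fun y hy hRmy => ?_⟩
  rcases hmax y hy (Or.inr hRmy) with rfl | h
  · exact hRmy
  · exact h
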